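/- Quadratic forms in the inverse of a positive definite matrix are nondecreasing under enlarging the matrix: let A be an (n+1)×(n+1) real positive definite matrix, let B be its n×n leading principal submatrix (B i j = A (castSucc i) (castSucc j)), let v : Fin (n+1) → ℝ and let w : Fin n → ℝ be its restriction (w i = v (castSucc i)). Then wᵀ B⁻¹ w ≤ vᵀ A⁻¹ v. -/

import Mathlib

open Matrix

private lemma herm_symm (m : ℕ) (A : Matrix (Fin m) (Fin m) ℝ) (h : A.IsHermitian) :
    Aᵀ = A := by
  ext i j
  have := congrFun (congrFun h.eq i) j
  simpa [conjTranspose_apply] using this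

private lemma symm_dot (m : ℕ) (A : Matrix (Fin m) (Fin m) ℝ) (h : A.IsHermitian)
    (u x : Fin m → ℝ) : u ⬝ᵥ (A *ᵥ x) = (A *ᵥ u) ⬝ᵥ x := by
  rw [dotProduct_mulVec, ← mulVec_transpose, herm_symm m A h]

private lemma key_ineq (m : ℕ) (A : Matrix (Fin m) (Fin m) ℝ) (hA : A.PosDef)
    (v x : Fin m → ℝ) : 2 * (v ⬝ᵥ x) - x ⬝ᵥ (A *ᵥ x) ≤ v ⬝ᵥ (A⁻¹ *ᵥ v) := by
  have hinv : A * A⁻¹ = 1 := mul_nonsing_inv A hA.det_pos.ne'.isUnit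
  set z : Fin m → ℝ := x - A⁻¹ *ᵥ v with hz
  have hs := hA.posSemidef.dotProduct_mulVec_nonneg z
  simp only [RCLike.star_def, starRingEnd_apply, star_trivial] at hs
  have hAz : A *ᵥ z = A *ᵥ x - v := by
    rw [hz, mulVec_sub, mulVec_mulVec, hinv, one_mulVec]
  rw [hz, hAz] at hs
  have h1 : (A⁻¹ *ᵥ v) ⬝ᵥ (A *ᵥ x) = v ⬝ᵥ x := by
    rw [symm_dot m A hA.1, mulVec_mulVec, hinv, one_mulVec]
  have h2 : x ⬝ᵥ v = v ⬝ᵥ x := dotProduct_comm _ _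
  have h3 : (A⁻¹ *ᵥ v) ⬝ᵥ v = v ⬝ᵥ (A⁻¹ *ᵥ v) := dotProduct_comm _ _
  simp only [sub_dotProduct, dotProduct_sub, h1, h2, h3] at hs
  linarith

theorem quadForm_inv_submatrix_le (n : ℕ) (A : Matrix (Fin (n + 1)) (Fin (n + 1)) ℝ)
    (hA : A.PosDef) (B : Matrix (Fin n) (Fin n) ℝ)
    (hB : ∀ i j : Fin n, B i j = A i.castSucc j.castSucc)
    (v : Fin (n + 1) → ℝ) (w : Fin n → ℝ) (hw : ∀ i : Fin n, w i = v i.castSucc) :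
    w ⬝ᵥ (B⁻¹ *ᵥ w) ≤ v ⬝ᵥ (A⁻¹ *ᵥ v) := by
  -- B is positive definite
  have hquad : ∀ y : Fin n → ℝ, y ⬝ᵥ (B *ᵥ y) =
      (Fin.snoc y 0 : Fin (n+1) → ℝ) ⬝ᵥ (A *ᵥ (Fin.snoc y 0)) := by
    intro y
    rw [dotProduct, dotProduct, Fin.sum_univ_castSucc]
    simp only [Fin.snoc_castSucc, Fin.snoc_last, zero_mul, add_zero]
    congr 1
    ext i
    congr 1
    rw [mulVec, mulVec, dotProduct, dotProduct, Fin.sum_univ_castSucc]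
    simp [hB, Fin.snoc_castSucc]
  have hPB : B.PosDef := by
    refine Matrix.PosDef.of_dotProduct_mulVec_pos ?_ ?_
    · ext i j
      simp only [conjTranspose_apply, star_trivial, hB]
      have := congrFun (congrFun (herm_symm (n+1) A hA.1) j.castSucc) i.castSucc
      simpa using this.symm
    · intro y hy
      simp only [RCLike.star_def, starRingEnd_apply, star_trivial]
      rw [hquad y]
      have hx : (Fin.snoc y 0 : Fin (n+1) → ℝ) ≠ 0 := by
        intro h
        apply hy
        ext i
        have := congrFun h i.castSucc
        simpa using this
      simpa using hA.dotProduct_mulVec_pos hx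
  have hinvB : B * B⁻¹ = 1 := mul_nonsing_inv B hPB.det_pos.ne'.isUnit
  set y : Fin n → ℝ := B⁻¹ *ᵥ w with hy
  have hBy : B *ᵥ y = w := by rw [hy, mulVec_mulVec, hinvB, one_mulVec]
  set x : Fin (n+1) → ℝ := Fin.snoc y 0 with hx
  have hvx : v ⬝ᵥ x = w ⬝ᵥ y := by
    rw [dotProduct, dotProduct, Fin.sum_univ_castSucc, hx]
    simp [hw, mul_comm]
  have hxAx : x ⬝ᵥ (A *ᵥ x) = y ⬝ᵥ (B *ᵥ y) := (hquad y).symm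
  have := key_ineq (n+1) A hA v x
  rw [hvx, hxAx, hBy] at this
  have hyw : y ⬝ᵥ w = w ⬝ᵥ y := dotProduct_comm _ _
  linarith
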